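/- Let n be even, γ = γ_n as above with z := ᵗσ(γ)w_ℓγ lying in the diagonal split torus and central in L = M_{(n/2,n/2)}. For m ∈ L, the conjugate γ m γ⁻¹ is fixed by θ (θ(g) = w_ℓ⁻¹(ᵗσ(g))⁻¹w_ℓ) if and only if m = (ᵗσ(m))⁻¹. Consequently the fixed-point group (γLγ⁻¹)^θ equals γ·(U × U)·γ⁻¹ where U = {x ∈ GL_{n/2}(E) : ᵗσ(x)·x = 1} is the unitary group of the identity form. -/
import Mathlib


open Matrix

noncomputable section

variable {E : Type*} [Field E]

/-- Conjugate-transpose with respect to the Galois automorphism `σ`. -/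
def ctr (σ : E ≃+* E) {n : ℕ} (g : Matrix (Fin n) (Fin n) E) : Matrix (Fin n) (Fin n) E :=
  (g.map ⇑σ)ᵀ

/-- The anti-diagonal permutation matrix `w_ℓ = J_n`. -/
def wl (E : Type*) [Field E] (n : ℕ) : Matrix (Fin n) (Fin n) E :=
  Matrix.of fun i j => if j = i.rev then 1 else 0

/-- The involution `θ(g) = w_ℓ⁻¹ (ᵗσ(g))⁻¹ w_ℓ`. -/
def theta (σ : E ≃+* E) {n : ℕ} (g : Matrix (Fin n) (Fin n) E) : Matrix (Fin n) (Fin n) E :=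
  (wl E n)⁻¹ * (ctr σ g)⁻¹ * wl E n

/-- The block-diagonal matrix `diag(x,y) ∈ M_{2m}(E)` for `x, y ∈ M_m(E)`. -/
def db {m : ℕ} (x y : Matrix (Fin m) (Fin m) E) : Matrix (Fin (m + m)) (Fin (m + m)) E :=
  Matrix.reindex finSumFinEquiv finSumFinEquiv (Matrix.fromBlocks x 0 0 y)

lemma ctr_mul (σ : E ≃+* E) {n : ℕ} (A B : Matrix (Fin n) (Fin n) E) :
    ctr σ (A * B) = ctr σ B * ctr σ A := by
  have : (A * B).map ⇑σ = A.map ⇑σ * B.map ⇑σ := Matrix.map_mul (f := (σ : E →+* E))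
  simp [ctr, this, Matrix.transpose_mul]

lemma ctr_one (σ : E ≃+* E) {n : ℕ} : ctr σ (1 : Matrix (Fin n) (Fin n) E) = 1 := by
  ext i j
  simp [ctr, Matrix.one_apply, Matrix.map_apply, apply_ite, eq_comm]

lemma ctr_det (σ : E ≃+* E) {n : ℕ} (A : Matrix (Fin n) (Fin n) E) :
    (ctr σ A).det = σ A.det := by
  rw [ctr, Matrix.det_transpose]
  exact (RingHom.map_det (σ : E →+* E) A).symm

lemma ctr_isUnit (σ : E ≃+* E) {n : ℕ} {A : Matrix (Fin n) (Fin n) E} (h : IsUnit A.det) :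
    IsUnit (ctr σ A).det := by
  rw [ctr_det]; exact h.map (σ : E →+* E)

lemma ctr_inv (σ : E ≃+* E) {n : ℕ} {A : Matrix (Fin n) (Fin n) E} (h : IsUnit A.det) :
    (ctr σ A)⁻¹ = ctr σ A⁻¹ := by
  apply Matrix.inv_eq_right_inv
  rw [← ctr_mul, Matrix.nonsing_inv_mul A h, ctr_one]

lemma wl_mul_wl {n : ℕ} : wl E n * wl E n = 1 := by
  ext i j
  rw [Matrix.mul_apply]
  simp only [wl, Matrix.of_apply, ite_mul, one_mul, zero_mul]
  rw [Finset.sum_eq_single i.rev]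
  · simp [Matrix.one_apply, Fin.rev_rev, eq_comm]
  · intro b _ hb
    simp [hb]
  · simp

lemma wl_inv {n : ℕ} : (wl E n)⁻¹ = wl E n := Matrix.inv_eq_right_inv wl_mul_wl

lemma db_mul {m : ℕ} (x y a b : Matrix (Fin m) (Fin m) E) :
    db x y * db a b = db (x * a) (y * b) := by
  simp [db, Matrix.reindex_apply, Matrix.submatrix_mul_equiv, Matrix.fromBlocks_multiply]

lemma db_one {m : ℕ} : db (1 : Matrix (Fin m) (Fin m) E) 1 = 1 := by
  simp [db, Matrix.fromBlocks_one]

lemma db_inj {m : ℕ} {x y a b : Matrix (Fin m) (Fin m) E} (h : db x y = db a b) :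
    x = a ∧ y = b := by
  have h2 : Matrix.fromBlocks x 0 0 y = Matrix.fromBlocks a 0 0 b := by
    have := congrArg (fun M => Matrix.reindex finSumFinEquiv.symm finSumFinEquiv.symm M) h
    simpa [db] using this
  constructor
  · have := congrArg Matrix.toBlocks₁₁ h2
    simpa using this
  · have := congrArg Matrix.toBlocks₂₂ h2
    simpa using this

lemma ctr_db (σ : E ≃+* E) {m : ℕ} (x y : Matrix (Fin m) (Fin m) E) :
    ctr σ (db x y) = db (ctr σ x) (ctr σ y) := by
  simp [ctr, db, Matrix.reindex_apply, Matrix.transpose_submatrix, ← Matrix.submatrix_map,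
    Matrix.fromBlocks_transpose, Matrix.fromBlocks_map]

lemma db_det {m : ℕ} {x y : Matrix (Fin m) (Fin m) E} (hx : IsUnit x.det) (hy : IsUnit y.det) :
    IsUnit (db x y).det := by
  rw [db, Matrix.det_reindex_self, Matrix.det_fromBlocks_zero₂₁]
  exact hx.mul hy

lemma sandwich_inj {n : ℕ} (w A : Matrix (Fin n) (Fin n) E) (hww : w * w = 1) [Invertible A]
    {X Y : Matrix (Fin n) (Fin n) E}
    (h : w * (A⁻¹ * X * A) * w = w * (A⁻¹ * Y * A) * w) : X = Y := by
  have cancelw : ∀ B : Matrix (Fin n) (Fin n) E, w * (w * B * w) * w = B := by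
    intro B
    calc w * (w * B * w) * w = (w * w) * B * (w * w) := by simp only [mul_assoc]
    _ = B := by rw [hww]; simp
  have h1 : A⁻¹ * X * A = A⁻¹ * Y * A := by
    have := congrArg (fun P => w * P * w) h
    simpa only [cancelw] using this
  have h2 := congrArg (fun P => A * P * A⁻¹) h1
  simpa only [mul_assoc, Matrix.mul_inv_cancel_left_of_invertible,
    Matrix.mul_inv_of_invertible, mul_one] using h2

/-- If `z = ᵗσ(γ)·w_ℓ·γ` is central in the Levi `L = M_{(n/2,n/2)}`, then for
`m ∈ L` the conjugate `γ m γ⁻¹` is `θ`-fixed iff `m = (ᵗσ(m))⁻¹`; consequently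
`(γLγ⁻¹)^θ = γ·(U × U)·γ⁻¹` with `U = {x : ᵗσ(x)·x = 1}` the unitary group of the
identity form. -/
theorem stmt9 (σ : E ≃+* E) (hσ : Function.Involutive ⇑σ) (m : ℕ)
    (γ : Matrix (Fin (m + m)) (Fin (m + m)) E) (hγ : IsUnit γ.det)
    (hz : ∀ x y : Matrix (Fin m) (Fin m) E,
      (ctr σ γ * wl E (m + m) * γ) * db x y = db x y * (ctr σ γ * wl E (m + m) * γ)) :
    (∀ x y : Matrix (Fin m) (Fin m) E, IsUnit x.det → IsUnit y.det →
      (theta σ (γ * db x y * γ⁻¹) = γ * db x y * γ⁻¹ ↔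
        db x y = (ctr σ (db x y))⁻¹)) ∧
    (∀ x y : Matrix (Fin m) (Fin m) E, IsUnit x.det → IsUnit y.det →
      (theta σ (γ * db x y * γ⁻¹) = γ * db x y * γ⁻¹ ↔
        (ctr σ x * x = 1 ∧ ctr σ y * y = 1))) := by
  set w : Matrix (Fin (m + m)) (Fin (m + m)) E := wl E (m + m) with hw
  set A : Matrix (Fin (m + m)) (Fin (m + m)) E := ctr σ γ with hA
  have hAdet : IsUnit A.det := ctr_isUnit σ hγ
  have : Invertible γ := Matrix.invertibleOfIsUnitDet γ hγ
  have : Invertible A := Matrix.invertibleOfIsUnitDet A hAdet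
  have hww : w * w = 1 := wl_mul_wl
  have hwinv : w⁻¹ = w := wl_inv
  have key : ∀ x y : Matrix (Fin m) (Fin m) E, IsUnit x.det → IsUnit y.det →
      (theta σ (γ * db x y * γ⁻¹) = γ * db x y * γ⁻¹ ↔
        db x y = (ctr σ (db x y))⁻¹) := by
    intro x y hx hy
    set M : Matrix (Fin (m + m)) (Fin (m + m)) E := db x y with hM
    have hconj : γ * M * γ⁻¹ = w * (A⁻¹ * M * A) * w := by
      have h1 : A * (w * (γ * M)) = M * (A * (w * γ)) := by
        have := hz x y
        simpa only [mul_assoc] using this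
      have h2 : w * (γ * M) = A⁻¹ * (M * (A * (w * γ))) := by
        rw [← h1, Matrix.inv_mul_cancel_left_of_invertible]
      have h3 : γ * M = w * (A⁻¹ * (M * (A * (w * γ)))) := by
        rw [← h2, ← mul_assoc, hww, one_mul]
      have h4 : γ * M = w * (A⁻¹ * M * A) * w * γ := by
        simp only [mul_assoc]; exact h3
      rw [h4, Matrix.mul_nonsing_inv_cancel_right _ _ hγ]
    have hctr : ctr σ (γ * M * γ⁻¹) = A⁻¹ * (ctr σ M * A) := by
      rw [ctr_mul, ctr_mul, ← ctr_inv σ hγ, ← hA]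
    have hinv : (A⁻¹ * (ctr σ M * A))⁻¹ = A⁻¹ * (ctr σ M)⁻¹ * A := by
      rw [Matrix.mul_inv_rev, Matrix.mul_inv_rev, Matrix.nonsing_inv_nonsing_inv A hAdet]
    have htheta : theta σ (γ * M * γ⁻¹) = w * (A⁻¹ * (ctr σ M)⁻¹ * A) * w := by
      rw [theta, ← hw, hwinv, hctr, hinv]
    constructor
    · intro h
      rw [htheta, hconj] at h
      exact (sandwich_inj w A hww h).symm
    · intro h
      rw [htheta, hconj, ← h]
  refine ⟨key, fun x y hx hy => ?_⟩
  rw [key x y hx hy]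
  have hctrdet : IsUnit (ctr σ (db x y)).det := ctr_isUnit σ (db_det hx hy)
  constructor
  · intro h
    have h1 : ctr σ (db x y) * db x y = 1 := by
      nth_rewrite 2 [h]
      rw [Matrix.mul_nonsing_inv _ hctrdet]
    rw [ctr_db, db_mul, ← db_one] at h1
    obtain ⟨ha, hb⟩ := db_inj h1
    exact ⟨ha, hb⟩
  · rintro ⟨h1, h2⟩
    have : ctr σ (db x y) * db x y = 1 := by
      rw [ctr_db, db_mul, h1, h2, db_one]
    exact (Matrix.inv_eq_right_inv this).symm
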